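/- For every complex number x and every natural number n, the function u ↦ exp( −3·2^{−1/3}·u² + 2^{1/3}·x·u )·u^n is Lebesgue integrable on ℝ and ∫_{−∞}^{∞} exp( −3·2^{−1/3}·u² + 2^{1/3}·x·u )·u^n du = 2^{1/6}·√(π/3)·exp(x²/6)·c_n(x), where c_n(x) := ∑_{k=0}^{⌊n/2⌋} x^{n−2k} · 3^{k−n} · 2^{−n/3−k} · n! / ( k!·(n−2k)! ). -/

import Mathlib

open Real MeasureTheory

/-- The coefficients `c_n(x) = ∑_{k=0}^{⌊n/2⌋} x^{n−2k} 3^{k−n} 2^{−n/3−k} n!/(k!(n−2k)!)`. -/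
noncomputable def c (x : ℂ) (n : ℕ) : ℂ :=
  ∑ k ∈ Finset.range (n / 2 + 1),
    x ^ (n - 2 * k) *
      ((((3 : ℝ) ^ ((k : ℤ) - (n : ℤ)) * (2 : ℝ) ^ (-(n : ℝ) / 3 - (k : ℝ)) *
          (n.factorial : ℝ) / ((k.factorial : ℝ) * ((n - 2 * k).factorial : ℝ))) : ℝ) : ℂ)

section PearceyAux

open Complex Filter

/-- The integrand family. -/
noncomputable def fI (b c : ℂ) (n : ℕ) (u : ℝ) : ℂ := Complex.exp (b*u^2 + c*u) * (u:ℂ)^n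

lemma norm_fI (b c : ℂ) (n : ℕ) (u : ℝ) :
    ‖fI b c n u‖ = Real.exp (b.re*u^2 + c.re*u) * |u|^n := by
  simp only [fI, norm_mul, Complex.norm_exp, norm_pow, Complex.norm_real, Real.norm_eq_abs]
  congr 2
  simp [Complex.add_re, Complex.mul_re, ← Complex.ofReal_pow]

lemma integrable_exp_quad {β : ℝ} (hβ : β < 0) (γ : ℝ) :
    Integrable (fun u : ℝ => Real.exp (β*u^2 + γ*u)) := by
  have h := (integrable_cexp_quadratic' (b := (β:ℂ)) (by simpa using hβ) (γ:ℂ) 0).norm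
  convert h using 2 with u
  simp [Complex.norm_exp, Complex.add_re, Complex.mul_re, ← Complex.ofReal_pow]

lemma norm_fI_le {b c : ℂ} (n : ℕ) (u : ℝ) :
    ‖fI b c n u‖ ≤ n.factorial * (Real.exp (b.re*u^2 + (c.re+1)*u) + Real.exp (b.re*u^2 + (c.re-1)*u)) := by
  rw [norm_fI]
  have h1 : |u|^n ≤ n.factorial * Real.exp |u| := by
    have := Real.pow_div_factorial_le_exp (x := |u|) (abs_nonneg u) n
    rw [div_le_iff₀ (by positivity)] at this
    linarith [this]
  have h2 : Real.exp |u| ≤ Real.exp u + Real.exp (-u) := by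
    rcases abs_cases u with ⟨h, _⟩ | ⟨h, _⟩ <;> rw [h] <;>
      [linarith [Real.exp_pos (-u)]; linarith [Real.exp_pos u]]
  calc Real.exp (b.re*u^2 + c.re*u) * |u|^n
      ≤ Real.exp (b.re*u^2 + c.re*u) * (n.factorial * (Real.exp u + Real.exp (-u))) := by
        apply mul_le_mul_of_nonneg_left _ (Real.exp_pos _).le
        exact h1.trans (by nlinarith [Real.exp_pos u, Real.exp_pos (-u), h2,
          (Nat.one_le_iff_ne_zero.mpr n.factorial_ne_zero : (1:ℕ) ≤ n.factorial)])
    _ = n.factorial * (Real.exp (b.re*u^2 + (c.re+1)*u) + Real.exp (b.re*u^2 + (c.re-1)*u)) := by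
        rw [mul_comm, mul_assoc]
        congr 1
        rw [add_mul, ← Real.exp_add, ← Real.exp_add]
        ring_nf

lemma integrable_fI {b : ℂ} (hb : b.re < 0) (c : ℂ) (n : ℕ) :
    Integrable (fI b c n) := by
  have hmeas : AEStronglyMeasurable (fI b c n) volume := by
    apply Continuous.aestronglyMeasurable
    unfold fI
    fun_prop
  refine Integrable.mono' (g := fun u => n.factorial *
    (Real.exp (b.re*u^2 + (c.re+1)*u) + Real.exp (b.re*u^2 + (c.re-1)*u))) ?_ hmeas
    (Filter.Eventually.of_forall fun u => norm_fI_le n u)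
  exact (((integrable_exp_quad hb (c.re+1)).add (integrable_exp_quad hb (c.re-1))).const_mul _)

lemma tendsto_quad {β : ℝ} (hβ : β < 0) (γ : ℝ) :
    Tendsto (fun u : ℝ => β*u^2 + γ*u) atTop atBot ∧
    Tendsto (fun u : ℝ => β*u^2 + γ*u) atBot atBot := by
  have heq : (fun u : ℝ => β*u^2 + γ*u) = fun u => u * (β*u + γ) := by funext u; ring
  constructor
  · rw [heq]
    apply Filter.Tendsto.atTop_mul_atBot₀ tendsto_id
    apply Filter.tendsto_atBot_add_const_right
    exact (tendsto_id.const_mul_atTop_of_neg hβ)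
  · rw [heq]
    apply Filter.Tendsto.atBot_mul_atTop₀ tendsto_id
    apply Filter.tendsto_atTop_add_const_right
    exact (tendsto_id.const_mul_atBot_of_neg hβ)

lemma tendsto_fI {b : ℂ} (hb : b.re < 0) (c : ℂ) (n : ℕ) (l : Filter ℝ)
    (hl : l = atTop ∨ l = atBot) :
    Tendsto (fI b c n) l (nhds 0) := by
  rw [tendsto_zero_iff_norm_tendsto_zero]
  apply squeeze_zero (fun u => norm_nonneg _) (fun u => norm_fI_le n u)
  have key : ∀ γ : ℝ, Tendsto (fun u : ℝ => Real.exp (b.re*u^2 + γ*u)) l (nhds 0) := by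
    intro γ
    apply Real.tendsto_exp_atBot.comp
    rcases hl with rfl | rfl
    · exact (tendsto_quad hb γ).1
    · exact (tendsto_quad hb γ).2
  have := ((key (c.re+1)).add (key (c.re-1))).const_mul (n.factorial : ℝ)
  simpa using this

lemma hasDerivAt_fI (b c : ℂ) (n : ℕ) (u : ℝ) :
    HasDerivAt (fI b c n)
      (2*b*fI b c (n+1) u + c*fI b c n u + n*fI b c (n-1) u) u := by
  have hW : HasDerivAt (fun z : ℂ => Complex.exp (b*z^2 + c*z) * z^n)
      (Complex.exp (b*(u:ℂ)^2 + c*u) * (2*b*u + c) * (u:ℂ)^n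
        + Complex.exp (b*(u:ℂ)^2 + c*u) * (n * (u:ℂ)^(n-1))) (u:ℂ) := by
    have h1 : HasDerivAt (fun z : ℂ => b*z^2 + c*z) (2*b*(u:ℂ) + c) (u:ℂ) := by
      have := ((hasDerivAt_pow 2 (u:ℂ)).const_mul b).add ((hasDerivAt_id (u:ℂ)).const_mul c)
      refine HasDerivAt.congr_deriv this ?_
      push_cast; ring
    exact (h1.cexp.mul (hasDerivAt_pow n (u:ℂ)))
  have := hW.comp_ofReal
  refine HasDerivAt.congr_deriv this ?_
  unfold fI
  ring

lemma recurrence_fI {b : ℂ} (hb : b.re < 0) (c : ℂ) (n : ℕ) :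
    2*b*(∫ u : ℝ, fI b c (n+1) u) + c*(∫ u : ℝ, fI b c n u)
      + n*(∫ u : ℝ, fI b c (n-1) u) = 0 := by
  set D : ℝ → ℂ := fun u => 2*b*fI b c (n+1) u + c*fI b c n u + n*fI b c (n-1) u with hD
  have hDint : Integrable D := by
    exact (((integrable_fI hb c (n+1)).const_mul _).add
      ((integrable_fI hb c n).const_mul _)).add ((integrable_fI hb c (n-1)).const_mul _)
  have hzero : (∫ u : ℝ, D u) = 0 := by
    have h1 : Tendsto (fun T : ℝ => ∫ u in (-T)..T, D u) atTop (nhds (∫ u : ℝ, D u)) :=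
      intervalIntegral_tendsto_integral hDint tendsto_neg_atTop_atBot tendsto_id
    have h2 : ∀ T : ℝ, (∫ u in (-T)..T, D u) = fI b c n T - fI b c n (-T) := fun T =>
      intervalIntegral.integral_eq_sub_of_hasDerivAt
        (fun u _ => hasDerivAt_fI b c n u) hDint.intervalIntegrable
    have h3 : Tendsto (fun T : ℝ => fI b c n T - fI b c n (-T)) atTop (nhds 0) := by
      have := (tendsto_fI hb c n atTop (Or.inl rfl)).sub
        ((tendsto_fI hb c n atBot (Or.inr rfl)).comp tendsto_neg_atTop_atBot)
      simpa using this
    simp_rw [h2] at h1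
    exact tendsto_nhds_unique h1 h3
  rw [← hzero]
  simp only [hD]
  rw [MeasureTheory.integral_add (f := fun u : ℝ => 2*b*fI b c (n+1) u + c*fI b c n u)
      (g := fun u : ℝ => (n:ℂ)*fI b c (n-1) u)
      (((integrable_fI hb c (n+1)).const_mul _).add ((integrable_fI hb c n).const_mul _))
      ((integrable_fI hb c (n-1)).const_mul _),
    MeasureTheory.integral_add (f := fun u : ℝ => 2*b*fI b c (n+1) u)
      (g := fun u : ℝ => c*fI b c n u)
      ((integrable_fI hb c (n+1)).const_mul _) ((integrable_fI hb c n).const_mul _),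
    MeasureTheory.integral_const_mul, MeasureTheory.integral_const_mul,
    MeasureTheory.integral_const_mul]

/-- The coefficient function. -/
noncomputable def A (n k : ℕ) : ℝ :=
  (3 : ℝ) ^ ((k : ℤ) - (n : ℤ)) * (2 : ℝ) ^ (-(n : ℝ) / 3 - (k : ℝ)) *
    (n.factorial : ℝ) / ((k.factorial : ℝ) * ((n - 2 * k).factorial : ℝ))

lemma A_exp (n k : ℕ) : A n k =
    Real.exp (Real.log 3 * ((k:ℝ)-(n:ℝ)) + Real.log 2 * (-(n:ℝ)/3-(k:ℝ)))
      * ((n.factorial : ℝ) / ((k.factorial : ℝ) * ((n - 2*k).factorial : ℝ))) := by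
  unfold A
  rw [mul_div_assoc, ← Real.rpow_intCast (3:ℝ) ((k:ℤ)-(n:ℤ)),
    Real.rpow_def_of_pos (by norm_num : (0:ℝ) < 3),
    Real.rpow_def_of_pos (by norm_num : (0:ℝ) < 2), ← Real.exp_add]
  push_cast
  ring_nf

lemma fac_id (m j : ℕ) :
    6 * (((m+2*j+3).factorial:ℝ)/((j+1).factorial*(m+1).factorial))
      = 6 * ((m+2*j+2).factorial/((j+1).factorial*(m:ℕ).factorial))
        + 12*((m:ℝ)+2*j+2) * ((m+2*j+1).factorial/((j:ℕ).factorial*(m+1).factorial)) := by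
  have e1 : ((m+2*j+3).factorial:ℝ) = ((m:ℝ)+2*j+3) * (m+2*j+2).factorial := by
    rw [show m+2*j+3 = (m+2*j+2)+1 by ring, Nat.factorial_succ]; push_cast; ring
  have e2 : ((m+2*j+2).factorial:ℝ) = ((m:ℝ)+2*j+2) * (m+2*j+1).factorial := by
    rw [show m+2*j+2 = (m+2*j+1)+1 by ring, Nat.factorial_succ]; push_cast; ring
  have e3 : (((j:ℕ)+1).factorial:ℝ) = ((j:ℝ)+1) * (j:ℕ).factorial := by
    rw [Nat.factorial_succ]; push_cast; ring
  have e4 : (((m:ℕ)+1).factorial:ℝ) = ((m:ℝ)+1) * (m:ℕ).factorial := by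
    rw [Nat.factorial_succ]; push_cast; ring
  have p1 : ((j:ℕ).factorial:ℝ) ≠ 0 := Nat.cast_ne_zero.mpr (Nat.factorial_ne_zero _)
  have p2 : ((m:ℕ).factorial:ℝ) ≠ 0 := Nat.cast_ne_zero.mpr (Nat.factorial_ne_zero _)
  have p3 : ((m:ℝ)+1) ≠ 0 := by positivity
  have p4 : ((j:ℝ)+1) ≠ 0 := by positivity
  rw [e1, e2, e3, e4]
  field_simp
  ring

lemma exp66 (a : ℝ) : Real.exp (a + (Real.log 3 + Real.log 2)) = Real.exp a * 6 := by
  rw [Real.exp_add, Real.exp_add, Real.exp_log (by norm_num : (0:ℝ)<3),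
    Real.exp_log (by norm_num : (0:ℝ)<2)]; ring

lemma exp12 (a : ℝ) : Real.exp (a + (Real.log 3 + (Real.log 2 + Real.log 2)))
    = Real.exp a * 12 := by
  rw [Real.exp_add, Real.exp_add, Real.exp_add, Real.exp_log (by norm_num : (0:ℝ)<3),
    Real.exp_log (by norm_num : (0:ℝ)<2)]; ring

lemma A_zero (n : ℕ) : 6 * A (n+1) 0 = (2:ℝ)^((2:ℝ)/3) * A n 0 := by
  rw [A_exp, A_exp, Real.rpow_def_of_pos (by norm_num : (0:ℝ) < 2)]
  rw [show n + 1 - 2*0 = n+1 by omega, show n - 2*0 = n by omega]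
  push_cast
  have hF1 : ((n+1).factorial:ℝ) / ((Nat.factorial 0 : ℝ) * ((n+1).factorial:ℝ)) = 1 := by
    rw [Nat.factorial_zero]
    field_simp; norm_num
  have hF2 : ((n).factorial:ℝ) / ((Nat.factorial 0 : ℝ) * ((n).factorial:ℝ)) = 1 := by
    rw [Nat.factorial_zero]
    field_simp; norm_num
  have k : Real.exp (Real.log 2 * (2/3)) *
      Real.exp (Real.log 3 * ((0:ℝ) - (n:ℝ)) + Real.log 2 * (-(n:ℝ)/3 - 0))
      = Real.exp (Real.log 3 * ((0:ℝ) - ((n:ℝ)+1)) + Real.log 2 * (-((n:ℝ)+1)/3 - 0)) * 6 := by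
    rw [← Real.exp_add, show Real.log 2 * (2/3) +
        (Real.log 3 * ((0:ℝ) - (n:ℝ)) + Real.log 2 * (-(n:ℝ)/3 - 0))
      = (Real.log 3 * ((0:ℝ) - ((n:ℝ)+1)) + Real.log 2 * (-((n:ℝ)+1)/3 - 0))
        + (Real.log 3 + Real.log 2) by ring, exp66]
  push_cast at hF1 hF2
  rw [hF1, hF2]
  linear_combination -k

lemma A_mid (m j : ℕ) :
    6 * A (m+2*j+3) (j+1)
      = (2:ℝ)^((2:ℝ)/3) * A (m+2*j+2) (j+1)
        + (2:ℝ)^((1:ℝ)/3) * ((m:ℝ)+2*j+2) * A (m+2*j+1) j := by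
  rw [A_exp, A_exp, A_exp,
    Real.rpow_def_of_pos (by norm_num : (0:ℝ) < 2) ((2:ℝ)/3),
    Real.rpow_def_of_pos (by norm_num : (0:ℝ) < 2) ((1:ℝ)/3)]
  rw [show m+2*j+3 - 2*(j+1) = m+1 by omega, show m+2*j+2 - 2*(j+1) = m by omega,
    show m+2*j+1 - 2*j = m+1 by omega]
  push_cast
  set l3 := Real.log 3
  set l2 := Real.log 2
  have k2 : Real.exp (l2 * (2/3)) *
      Real.exp (l3 * (((j:ℝ)+1)-((m:ℝ)+2*j+2)) + l2 * (-((m:ℝ)+2*j+2)/3-((j:ℝ)+1)))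
      = Real.exp (l3 * (((j:ℝ)+1)-((m:ℝ)+2*j+3)) + l2 * (-((m:ℝ)+2*j+3)/3-((j:ℝ)+1))) * 6 := by
    rw [← Real.exp_add, show l2 * (2/3) +
        (l3 * (((j:ℝ)+1)-((m:ℝ)+2*j+2)) + l2 * (-((m:ℝ)+2*j+2)/3-((j:ℝ)+1)))
      = (l3 * (((j:ℝ)+1)-((m:ℝ)+2*j+3)) + l2 * (-((m:ℝ)+2*j+3)/3-((j:ℝ)+1)))
        + (l3 + l2) by ring, exp66]
  have k3 : Real.exp (l2 * (1/3)) *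
      Real.exp (l3 * ((j:ℝ)-((m:ℝ)+2*j+1)) + l2 * (-((m:ℝ)+2*j+1)/3-(j:ℝ)))
      = Real.exp (l3 * (((j:ℝ)+1)-((m:ℝ)+2*j+3)) + l2 * (-((m:ℝ)+2*j+3)/3-((j:ℝ)+1))) * 12 := by
    rw [← Real.exp_add, show l2 * (1/3) +
        (l3 * ((j:ℝ)-((m:ℝ)+2*j+1)) + l2 * (-((m:ℝ)+2*j+1)/3-(j:ℝ)))
      = (l3 * (((j:ℝ)+1)-((m:ℝ)+2*j+3)) + l2 * (-((m:ℝ)+2*j+3)/3-((j:ℝ)+1)))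
        + (l3 + (l2 + l2)) by ring, exp12]
  have hfac := fac_id m j
  push_cast at hfac
  linear_combination
    (Real.exp (l3 * (((j:ℝ)+1)-((m:ℝ)+2*j+3)) + l2 * (-((m:ℝ)+2*j+3)/3-((j:ℝ)+1)))) * hfac
    - (((m+2*j+2).factorial:ℝ)/(((j+1).factorial:ℝ)*((m:ℕ).factorial:ℝ))) * k2
    - (((m:ℝ)+2*j+2) * (((m+2*j+1).factorial:ℝ)/(((j:ℕ).factorial:ℝ)*(((m:ℕ)+1).factorial:ℝ)))) * k3

lemma A_top (j : ℕ) :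
    6 * A (2*j+2) (j+1) = (2:ℝ)^((1:ℝ)/3) * (2*(j:ℝ)+1) * A (2*j) j := by
  rw [A_exp, A_exp, Real.rpow_def_of_pos (by norm_num : (0:ℝ) < 2) ((1:ℝ)/3)]
  rw [show 2*j+2 - 2*(j+1) = 0 by omega, show 2*j - 2*j = 0 by omega]
  push_cast
  set l3 := Real.log 3
  set l2 := Real.log 2
  have k3 : Real.exp (l2 * (1/3)) *
      Real.exp (l3 * ((j:ℝ)-(2*(j:ℝ))) + l2 * (-(2*(j:ℝ))/3-(j:ℝ)))
      = Real.exp (l3 * (((j:ℝ)+1)-(2*(j:ℝ)+2)) + l2 * (-(2*(j:ℝ)+2)/3-((j:ℝ)+1))) * 12 := by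
    rw [← Real.exp_add, show l2 * (1/3) +
        (l3 * ((j:ℝ)-(2*(j:ℝ))) + l2 * (-(2*(j:ℝ))/3-(j:ℝ)))
      = (l3 * (((j:ℝ)+1)-(2*(j:ℝ)+2)) + l2 * (-(2*(j:ℝ)+2)/3-((j:ℝ)+1)))
        + (l3 + (l2 + l2)) by ring, exp12]
  have e1' : (((2*j+2):ℕ).factorial:ℝ) = (2*(j:ℝ)+2) * ((2*(j:ℝ)+1) * ((2*j:ℕ).factorial:ℝ)) := by
    rw [show 2*j+2 = (2*j+1)+1 by ring, Nat.factorial_succ, show 2*j+1 = (2*j)+1 by ring,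
      Nat.factorial_succ]
    push_cast; ring
  have e3 : (((j:ℕ)+1).factorial:ℝ) = ((j:ℝ)+1) * ((j:ℕ).factorial:ℝ) := by
    rw [Nat.factorial_succ]; push_cast; ring
  have hfac : 6 * ((((2*j+2):ℕ).factorial:ℝ) / (((j+1).factorial:ℝ) * ((Nat.factorial 0 : ℕ):ℝ)))
      = 12 * (2*(j:ℝ)+1) * (((2*j:ℕ).factorial:ℝ) / (((j:ℕ).factorial:ℝ) * ((Nat.factorial 0 : ℕ):ℝ))) := by
    rw [e1', e3, Nat.factorial_zero]
    have p1 : ((j:ℕ).factorial:ℝ) ≠ 0 := Nat.cast_ne_zero.mpr (Nat.factorial_ne_zero _)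
    have p4 : ((j:ℝ)+1) ≠ 0 := by positivity
    push_cast
    field_simp
    ring
  push_cast at hfac
  linear_combination
    (Real.exp (l3 * (((j:ℝ)+1)-(2*(j:ℝ)+2)) + l2 * (-(2*(j:ℝ)+2)/3-((j:ℝ)+1)))) * hfac
    - ((2*(j:ℝ)+1) * (((2*j:ℕ).factorial:ℝ)/(((j:ℕ).factorial:ℝ)*((Nat.factorial 0:ℕ):ℝ)))) * k3

lemma rp1 : (2:ℝ)^(-(1:ℝ)/3) * (2:ℝ)^((2:ℝ)/3) = (2:ℝ)^((1:ℝ)/3) := by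
  rw [← Real.rpow_add two_pos]; norm_num
lemma rp2 : (2:ℝ)^(-(1:ℝ)/3) * (2:ℝ)^((1:ℝ)/3) = 1 := by
  rw [← Real.rpow_add two_pos]; norm_num
lemma rp3 : (2:ℝ)^((1:ℝ)/3) * (2:ℝ)^((1:ℝ)/3) = 2 * (2:ℝ)^(-(1:ℝ)/3) := by
  rw [← Real.rpow_add two_pos, show (2:ℝ)*(2:ℝ)^(-(1:ℝ)/3) = 2^(1:ℝ)*2^(-(1:ℝ)/3) by
    rw [Real.rpow_one], ← Real.rpow_add two_pos]
  norm_num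

end PearceyAux



section PearceyAux2
open Complex Filter

lemma c_eq (x : ℂ) (n : ℕ) :
    c x n = ∑ k ∈ Finset.range (n / 2 + 1), x ^ (n - 2*k) * ((A n k : ℝ) : ℂ) := rfl

lemma c_zero (x : ℂ) : c x 0 = 1 := by
  rw [c_eq]
  simp only [show (0:ℕ)/2+1 = 1 from rfl, Finset.sum_range_one]
  have : A 0 0 = 1 := by
    unfold A
    norm_num
  rw [this]
  norm_num

lemma c_rec (x : ℂ) (n : ℕ) :
    6 * c x (n+1) = (((2:ℝ)^((2:ℝ)/3) : ℝ):ℂ) * x * c x n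
      + (((2:ℝ)^((1:ℝ)/3) : ℝ):ℂ) * (n:ℂ) * c x (n-1) := by
  rcases Nat.eq_zero_or_pos n with rfl | hn
  · have h := A_zero 0
    have h' : ((6 * A 1 0 : ℝ):ℂ) = (((2:ℝ)^((2:ℝ)/3) * A 0 0 : ℝ):ℂ) := by exact_mod_cast h
    push_cast at h'
    simp only [c_eq, show (1:ℕ)/2+1 = 1 from rfl, show (0:ℕ)/2+1 = 1 from rfl,
      Finset.sum_range_one, show (0:ℕ)-1 = 0 from rfl]
    norm_num
    linear_combination x * h'
  set M := (n+1)/2 with hM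
  have hMn : n/2 + 1 ≤ M + 1 := by omega
  have hMm : (n-1)/2 + 1 = M := by omega
  set h1 : ℕ → ℂ := fun k => if k ≤ n/2 then
      x ^ (n+1-2*k) * ((((2:ℝ)^((2:ℝ)/3) * A n k : ℝ)):ℂ) else 0 with hh1
  set h2 : ℕ → ℂ := fun k => if 1 ≤ k then
      x ^ (n+1-2*k) * ((((2:ℝ)^((1:ℝ)/3) * (n:ℝ) * A (n-1) (k-1) : ℝ)):ℂ) else 0 with hh2
  have step1 : 6 * c x (n+1) = ∑ k ∈ Finset.range (M+1), x ^ (n+1-2*k) * ((6 * A (n+1) k : ℝ):ℂ) := by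
    rw [c_eq, Finset.mul_sum]
    refine Finset.sum_congr (by rw [hM]) fun k hk => ?_
    push_cast
    ring
  have step2 : ∀ k ∈ Finset.range (M+1),
      x ^ (n+1-2*k) * ((6 * A (n+1) k : ℝ):ℂ) = h1 k + h2 k := by
    intro k hk
    rw [Finset.mem_range] at hk
    rcases Nat.eq_zero_or_pos k with rfl | hk1
    · simp only [hh1, hh2, if_pos (Nat.zero_le _), if_neg (by norm_num : ¬ (1:ℕ) ≤ 0), add_zero]
      have h' : ((6 * A (n+1) 0 : ℝ):ℂ) = (((2:ℝ)^((2:ℝ)/3) * A n 0 : ℝ):ℂ) := by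
        exact_mod_cast A_zero n
      rw [h']
    · by_cases hk2 : k ≤ n/2
      · have hA := A_mid (n-2*k) (k-1)
        rw [show n-2*k+2*(k-1)+3 = n+1 by omega, show n-2*k+2*(k-1)+2 = n by omega,
          show n-2*k+2*(k-1)+1 = n-1 by omega, show (k-1)+1 = k by omega] at hA
        have hco : ((n-2*k:ℕ):ℝ) + 2*((k-1:ℕ):ℝ) + 2 = (n:ℝ) := by
          push_cast [Nat.cast_sub (by omega : 2*k ≤ n), Nat.cast_sub (by omega : 1 ≤ k)]
          ring
        rw [hco] at hA
        have h' : ((6 * A (n+1) k : ℝ):ℂ)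
            = (((2:ℝ)^((2:ℝ)/3) * A n k + (2:ℝ)^((1:ℝ)/3) * (n:ℝ) * A (n-1) (k-1) : ℝ):ℂ) := by
          exact_mod_cast hA
        simp only [hh1, hh2, if_pos hk2, if_pos (show (1:ℕ) ≤ k by omega)]
        rw [h']
        push_cast
        ring
      · have h2k : 2*k = n+1 := by omega
        have hA := A_top (k-1)
        rw [show 2*(k-1)+2 = n+1 by omega, show (k-1)+1 = k by omega,
          show 2*(k-1) = n-1 by omega] at hA
        have hco : 2*((k-1:ℕ):ℝ) + 1 = (n:ℝ) := by
          push_cast [Nat.cast_sub (by omega : 1 ≤ k)]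
          have : (2:ℝ)*k = n+1 := by exact_mod_cast congrArg (Nat.cast : ℕ → ℝ) h2k
          linarith
        rw [hco] at hA
        have h' : ((6 * A (n+1) k : ℝ):ℂ)
            = (((2:ℝ)^((1:ℝ)/3) * (n:ℝ) * A (n-1) (k-1) : ℝ):ℂ) := by exact_mod_cast hA
        simp only [hh1, hh2, if_neg hk2, if_pos (show (1:ℕ) ≤ k by omega)]
        rw [h', zero_add]
  have step3 : ∑ k ∈ Finset.range (M+1), h1 k
      = (((2:ℝ)^((2:ℝ)/3) : ℝ):ℂ) * x * c x n := by
    rw [c_eq, Finset.mul_sum]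
    rw [← Finset.sum_subset (Finset.range_subset_range.mpr hMn)
      (fun k _ hk => by simp only [hh1]; rw [if_neg (by simp only [Finset.mem_range] at hk; omega)])]
    refine Finset.sum_congr rfl fun k hk => ?_
    rw [Finset.mem_range] at hk
    simp only [hh1]
    rw [if_pos (by omega : k ≤ n/2), show n+1-2*k = (n-2*k)+1 by omega, pow_succ]
    push_cast
    ring
  have step4 : ∑ k ∈ Finset.range (M+1), h2 k
      = (((2:ℝ)^((1:ℝ)/3) : ℝ):ℂ) * (n:ℂ) * c x (n-1) := by
    rw [c_eq, Finset.mul_sum, Finset.sum_range_succ']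
    simp only [hh2, if_neg (by norm_num : ¬ (1:ℕ) ≤ 0), add_zero,
      if_pos (by omega : ∀ k:ℕ, 1 ≤ k+1)]
    rw [← hMm]
    refine Finset.sum_congr rfl fun k hk => ?_
    rw [Finset.mem_range] at hk
    rw [show k+1-1 = k by omega, show n+1-2*(k+1) = (n-1)-2*k by omega]
    push_cast
    ring
  rw [step1, Finset.sum_congr rfl step2, Finset.sum_add_distrib, step3, step4]

lemma sqrt_piece :
    ((π : ℂ) / -(-3 * (((2:ℝ)^(-(1:ℝ)/3) : ℝ) : ℂ))) ^ ((1:ℂ)/2)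
      = ((((2:ℝ)^((1:ℝ)/6) : ℝ)) : ℂ) * ((Real.sqrt (π/3) : ℝ) : ℂ) := by
  have hb3 : -(-3 * (((2:ℝ)^(-(1:ℝ)/3) : ℝ) : ℂ)) = ((3 * (2:ℝ)^(-(1:ℝ)/3) : ℝ) : ℂ) := by
    push_cast; ring
  have hr : (0:ℝ) < π / (3 * (2:ℝ)^(-(1:ℝ)/3)) := by positivity
  rw [hb3, ← Complex.ofReal_div, show ((1:ℂ)/2) = (((1:ℝ)/2 : ℝ) : ℂ) by norm_num,
    ← Complex.ofReal_cpow hr.le, ← Complex.ofReal_mul]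
  congr 1
  have key : π / (3 * (2:ℝ)^(-(1:ℝ)/3)) = (2:ℝ)^((1:ℝ)/3) * (π/3) := by
    rw [show (-(1:ℝ)/3) = -((1:ℝ)/3) by norm_num, Real.rpow_neg two_pos.le]
    have := (Real.rpow_pos_of_pos two_pos ((1:ℝ)/3)).ne'
    field_simp
  rw [key, Real.mul_rpow (by positivity) (by positivity), ← Real.rpow_mul two_pos.le,
    Real.sqrt_eq_rpow]
  norm_num

end PearceyAux2

section Main
open Complex Filter

/-- The Gaussian moment integrals: `u ↦ exp(−3·2^{−1/3}u² + 2^{1/3}xu)·uⁿ` is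
integrable on `ℝ` with integral `2^{1/6}·√(π/3)·exp(x²/6)·c_n(x)`. -/
theorem pearcey_gaussian_moments (x : ℂ) (n : ℕ) :
    Integrable (fun u : ℝ =>
      Complex.exp (-3 * (((2 : ℝ) ^ (-(1 : ℝ) / 3) : ℝ) : ℂ) * (u : ℂ) ^ 2 +
        (((2 : ℝ) ^ ((1 : ℝ) / 3) : ℝ) : ℂ) * x * (u : ℂ)) * (u : ℂ) ^ n) ∧
    (∫ u : ℝ,
        Complex.exp (-3 * (((2 : ℝ) ^ (-(1 : ℝ) / 3) : ℝ) : ℂ) * (u : ℂ) ^ 2 +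
          (((2 : ℝ) ^ ((1 : ℝ) / 3) : ℝ) : ℂ) * x * (u : ℂ)) * (u : ℂ) ^ n) =
      (((2 : ℝ) ^ ((1 : ℝ) / 6) : ℝ) : ℂ) * ((Real.sqrt (π / 3) : ℝ) : ℂ) *
        Complex.exp (x ^ 2 / 6) * c x n := by
  set b : ℂ := -3 * (((2 : ℝ) ^ (-(1 : ℝ) / 3) : ℝ) : ℂ) with hbdef
  set cc : ℂ := (((2 : ℝ) ^ ((1 : ℝ) / 3) : ℝ) : ℂ) * x with hccdef
  set K : ℂ := (((2 : ℝ) ^ ((1 : ℝ) / 6) : ℝ) : ℂ) * ((Real.sqrt (π / 3) : ℝ) : ℂ) *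
      Complex.exp (x ^ 2 / 6) with hKdef
  have hr : (0:ℝ) < (2:ℝ)^(-(1:ℝ)/3) := Real.rpow_pos_of_pos two_pos _
  have hb : b.re < 0 := by
    rw [hbdef]
    simp only [Complex.mul_re, Complex.ofReal_re, Complex.ofReal_im]
    simp
    positivity
  have hbne : b ≠ 0 := by
    rw [hbdef]
    simp only [ne_eq, mul_eq_zero, Complex.ofReal_eq_zero]
    push_neg
    constructor
    · norm_num
    · exact hr.ne'
  have h2b : (2:ℂ)*b ≠ 0 := mul_ne_zero two_ne_zero hbne
  -- cast power facts
  have hp1 : (((2:ℝ)^(-(1:ℝ)/3) : ℝ):ℂ) * (((2:ℝ)^((2:ℝ)/3) : ℝ):ℂ) = (((2:ℝ)^((1:ℝ)/3) : ℝ):ℂ) := by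
    exact_mod_cast congrArg (Complex.ofReal) rp1
  have hp2 : (((2:ℝ)^(-(1:ℝ)/3) : ℝ):ℂ) * (((2:ℝ)^((1:ℝ)/3) : ℝ):ℂ) = 1 := by
    exact_mod_cast congrArg (Complex.ofReal) rp2
  have hp3 : (((2:ℝ)^((1:ℝ)/3) : ℝ):ℂ) * (((2:ℝ)^((1:ℝ)/3) : ℝ):ℂ)
      = 2 * (((2:ℝ)^(-(1:ℝ)/3) : ℝ):ℂ) := by
    exact_mod_cast congrArg (Complex.ofReal) rp3
  -- base case
  have hI0 : (∫ u : ℝ, fI b cc 0 u) = K := by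
    have hq := integral_cexp_quadratic hb cc 0
    simp only [add_zero, zero_sub] at hq
    have hL : (∫ u : ℝ, fI b cc 0 u) = ∫ u : ℝ, Complex.exp (b*(u:ℂ)^2 + cc*(u:ℂ)) := by
      congr 1
      funext u
      simp [fI]
    rw [hL, hq]
    have h4b : (4:ℂ)*b ≠ 0 := mul_ne_zero (by norm_num) hbne
    have hexp : -(cc^2/(4*b)) = x^2/6 := by
      rw [neg_div', div_eq_div_iff h4b (by norm_num : (6:ℂ) ≠ 0), hccdef, hbdef]
      linear_combination (-6*x^2) * hp3
    rw [hexp, hKdef, hbdef]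
    rw [sqrt_piece]
  -- induction
  have main : ∀ m : ℕ, (∫ u : ℝ, fI b cc m u) = K * c x m
      ∧ (∫ u : ℝ, fI b cc (m+1) u) = K * c x (m+1) := by
    intro m
    induction m with
    | zero =>
      constructor
      · rw [hI0, c_zero, mul_one]
      · -- P 1
        have hrec := recurrence_fI hb cc 0
        simp only [Nat.cast_zero, zero_mul, add_zero] at hrec
        have hcr := c_rec x 0
        simp only [Nat.cast_zero, mul_zero, zero_mul, add_zero] at hcr
        rw [c_zero, mul_one] at hcr
        rw [hI0] at hrec
        have : (∫ u : ℝ, fI b cc (0+1) u) = -(cc*K)/(2*b) := by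
          rw [eq_div_iff h2b]
          linear_combination hrec
        rw [this, div_eq_iff h2b, hbdef, hccdef]
        linear_combination (((2:ℝ)^(-(1:ℝ)/3) : ℝ):ℂ) * K * hcr + K * x * hp1
    | succ k ih =>
      refine ⟨ih.2, ?_⟩
      have hrec := recurrence_fI hb cc (k+1)
      simp only [Nat.add_sub_cancel] at hrec
      rw [ih.1, ih.2] at hrec
      have hcr := c_rec x (k+1)
      simp only [Nat.add_sub_cancel] at hcr
      have hI2 : (∫ u : ℝ, fI b cc (k+1+1) u)
          = (-(cc*(K*c x (k+1))) - ((k:ℂ)+1)*(K*c x k)) / (2*b) := by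
        rw [eq_div_iff h2b]
        push_cast at hrec
        linear_combination hrec
      rw [hI2, div_eq_iff h2b, hbdef, hccdef]
      push_cast at hcr
      linear_combination (((2:ℝ)^(-(1:ℝ)/3) : ℝ):ℂ) * K * hcr
        + K * x * (c x (k+1)) * hp1 + ((k:ℂ)+1) * K * (c x k) * hp2
  constructor
  · exact integrable_fI hb cc n
  · exact (main n).1


end Main
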